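/- arXiv:2403.02104 — 2 statements merged into one kernel-verified Lean document; each statement's English description precedes it below -/
import Mathlib

section
/- Let m ≥ 2 be an integer and let v : ℝ^m ∖ {0} → ℝ^{m³} be the cubic Misawa–Nakauchi map with components v_{ijk}(x) = (1/√((m−1)(m+2)))( δ_{ij} x_k/r + δ_{jk} x_i/r + δ_{ik} x_j/r − (m+2) x_i x_j x_k / r³ ). Then for every x ∈ ℝ^m ∖ {0} and all indices i,j,k, the componentwise Euclidean bi-Laplacian satisfies Δ²v_{ijk}(x) = (15(m+1)(m−1)/r(x)⁴) v_{ijk}(x). -/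
noncomputable section

open Real MeasureTheory

/-- Partial derivative of `f` in the `a`-th coordinate direction. -/
def pd {m : ℕ} (a : Fin m) (f : EuclideanSpace ℝ (Fin m) → ℝ)
    (x : EuclideanSpace ℝ (Fin m)) : ℝ :=
  fderiv ℝ f x (EuclideanSpace.single a 1)

/-- Euclidean Laplacian `Δf = Σ_a ∂²f/∂x_a²`. -/
def lap {m : ℕ} (f : EuclideanSpace ℝ (Fin m) → ℝ)
    (x : EuclideanSpace ℝ (Fin m)) : ℝ :=
  ∑ a : Fin m, pd a (pd a f) x

/-- Squared norm of the total derivative: `|∇w|² = Σ_{k,a} (∂_k w_a)²`. -/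
def gradSq {m : ℕ} {ι : Type*} [Fintype ι]
    (w : ι → EuclideanSpace ℝ (Fin m) → ℝ) (x : EuclideanSpace ℝ (Fin m)) : ℝ :=
  ∑ k : Fin m, ∑ a : ι, (pd k (w a) x) ^ 2

/-- The cubic Misawa–Nakauchi map
`v_{ijk}(x) = (1/√((m−1)(m+2)))(δ_{ij}x_k/r + δ_{jk}x_i/r + δ_{ik}x_j/r − (m+2)xᵢxⱼx_k/r³)`. -/
def vMN (m : ℕ) (i j k : Fin m) (x : EuclideanSpace ℝ (Fin m)) : ℝ :=
  (1 / Real.sqrt (((m : ℝ) - 1) * ((m : ℝ) + 2))) *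
    ((if i = j then (1 : ℝ) else 0) * x k / ‖x‖
      + (if j = k then (1 : ℝ) else 0) * x i / ‖x‖
      + (if i = k then (1 : ℝ) else 0) * x j / ‖x‖
      - ((m : ℝ) + 2) * x i * x j * x k / ‖x‖ ^ 3)


variable {m : ℕ} {x : EuclideanSpace ℝ (Fin m)} {a b c : Fin m} {e : ℤ}

lemma pd_congr_of_ne {f g : EuclideanSpace ℝ (Fin m) → ℝ} (hx : x ≠ 0)
    (h : ∀ y : EuclideanSpace ℝ (Fin m), y ≠ 0 → f y = g y) (a : Fin m) :
    pd a f x = pd a g x := by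
  unfold pd
  have hev : f =ᶠ[nhds x] g := by
    filter_upwards [IsOpen.mem_nhds isOpen_compl_singleton
      (by simpa using hx : x ∈ ({0}ᶜ : Set (EuclideanSpace ℝ (Fin m))))] with y hy
    exact h y (by simpa using hy)
  rw [hev.fderiv_eq]

lemma pd_mul {f g : EuclideanSpace ℝ (Fin m) → ℝ} (hf : DifferentiableAt ℝ f x)
    (hg : DifferentiableAt ℝ g x) (a : Fin m) :
    pd a (fun y => f y * g y) x = pd a f x * g x + f x * pd a g x := by
  unfold pd
  rw [fderiv_fun_mul hf hg]
  simp only [ContinuousLinearMap.add_apply, ContinuousLinearMap.smul_apply, smul_eq_mul]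
  ring

lemma pd_add {f g : EuclideanSpace ℝ (Fin m) → ℝ} (hf : DifferentiableAt ℝ f x)
    (hg : DifferentiableAt ℝ g x) (a : Fin m) :
    pd a (fun y => f y + g y) x = pd a f x + pd a g x := by
  unfold pd
  rw [fderiv_fun_add hf hg]; simp

lemma hasFDerivAt_coord :
    HasFDerivAt (fun y : EuclideanSpace ℝ (Fin m) => y b)
      (EuclideanSpace.proj (𝕜 := ℝ) b) x :=
  (EuclideanSpace.proj (𝕜 := ℝ) b).hasFDerivAt

lemma diff_coord : DifferentiableAt ℝ (fun y : EuclideanSpace ℝ (Fin m) => y b) x :=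
  hasFDerivAt_coord.differentiableAt

lemma pd_coord : pd a (fun y : EuclideanSpace ℝ (Fin m) => y b) x
    = if b = a then 1 else 0 := by
  rw [pd, (hasFDerivAt_coord (m := m) (b := b) (x := x)).fderiv]
  simp [EuclideanSpace.single_apply]

lemma hasFDerivAt_rz (hx : x ≠ 0) (e : ℤ) :
    HasFDerivAt (fun y : EuclideanSpace ℝ (Fin m) => ‖y‖ ^ e)
      ((e * ‖x‖ ^ (e - 2)) • innerSL ℝ x) x := by
  have hr : ‖x‖ ≠ 0 := norm_ne_zero_iff.mpr hx
  have h1 : HasFDerivAt (fun y : EuclideanSpace ℝ (Fin m) => ‖y‖ ^ (2:ℕ))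
      (2 • innerSL ℝ x) x := (hasStrictFDerivAt_norm_sq x).hasFDerivAt
  have h2 : HasDerivAt Real.sqrt (1 / (2 * Real.sqrt (‖x‖ ^ (2:ℕ)))) (‖x‖ ^ (2:ℕ)) :=
    Real.hasDerivAt_sqrt (by positivity)
  have h3 : HasFDerivAt (fun y : EuclideanSpace ℝ (Fin m) => ‖y‖)
      ((1 / (2 * Real.sqrt (‖x‖ ^ (2:ℕ)))) • (2 • innerSL ℝ x)) x := by
    have h := h2.comp_hasFDerivAt x h1
    refine h.congr_of_eventuallyEq (Filter.Eventually.of_forall fun y => ?_)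
    · simp [Function.comp, Real.sqrt_sq (norm_nonneg _)]
  have h4 : HasDerivAt (fun t : ℝ => t ^ e) ((e : ℝ) * ‖x‖ ^ (e - 1)) ‖x‖ :=
    hasDerivAt_zpow e ‖x‖ (Or.inl hr)
  have h5 := h4.comp_hasFDerivAt x h3
  have h6 : HasFDerivAt (fun y : EuclideanSpace ℝ (Fin m) => ‖y‖ ^ e)
      (((e : ℝ) * ‖x‖ ^ (e - 1)) • (1 / (2 * Real.sqrt (‖x‖ ^ (2:ℕ)))) • 2 • innerSL ℝ x) x := h5
  have hCLM : ((e : ℝ) * ‖x‖ ^ (e - 2)) • innerSL ℝ x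
      = ((e : ℝ) * ‖x‖ ^ (e - 1)) • (1 / (2 * Real.sqrt (‖x‖ ^ (2:ℕ)))) • 2 • innerSL ℝ x := by
    ext v
    simp only [ContinuousLinearMap.smul_apply, smul_eq_mul,
      Real.sqrt_sq (norm_nonneg _)]
    have hpow : ‖x‖ ^ (e - 1) = ‖x‖ ^ (e - 2) * ‖x‖ := by
      rw [← zpow_add_one₀ hr]; ring_nf
    rw [hpow]
    field_simp
    ring
  rw [hCLM]
  exact h6

lemma diff_rz (hx : x ≠ 0) :
    DifferentiableAt ℝ (fun y : EuclideanSpace ℝ (Fin m) => ‖y‖ ^ e) x :=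
  (hasFDerivAt_rz hx e).differentiableAt

lemma pd_rz (hx : x ≠ 0) :
    pd a (fun y : EuclideanSpace ℝ (Fin m) => ‖y‖ ^ e) x = e * x a * ‖x‖ ^ (e - 2) := by
  rw [pd, (hasFDerivAt_rz hx e).fderiv]
  simp [EuclideanSpace.inner_single_right]
  ring

lemma pd_const_mul {f : EuclideanSpace ℝ (Fin m) → ℝ} (C : ℝ)
    (hf : DifferentiableAt ℝ f x) (a : Fin m) :
    pd a (fun y => C * f y) x = C * pd a f x := by
  unfold pd
  rw [fderiv_const_mul hf]; simp

variable {f g : EuclideanSpace ℝ (Fin m) → ℝ}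

lemma D1 (hx : x ≠ 0) :
    DifferentiableAt ℝ (fun y : EuclideanSpace ℝ (Fin m) => y b * ‖y‖ ^ e) x :=
  diff_coord.mul (diff_rz hx)

lemma P1 (hx : x ≠ 0) : pd a (fun y : EuclideanSpace ℝ (Fin m) => y b * ‖y‖ ^ e) x
    = (if b = a then (1:ℝ) else 0) * ‖x‖ ^ e + x b * (e * x a * ‖x‖ ^ (e - 2)) := by
  rw [pd_mul diff_coord (diff_rz hx), pd_coord, pd_rz hx]

lemma D2 (hx : x ≠ 0) {c : Fin m} :
    DifferentiableAt ℝ (fun y : EuclideanSpace ℝ (Fin m) => y b * (y c * ‖y‖ ^ e)) x :=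
  diff_coord.mul (D1 hx)

lemma P2 (hx : x ≠ 0) {c : Fin m} :
    pd a (fun y : EuclideanSpace ℝ (Fin m) => y b * (y c * ‖y‖ ^ e)) x
    = (if b = a then (1:ℝ) else 0) * (x c * ‖x‖ ^ e)
      + x b * ((if c = a then (1:ℝ) else 0) * ‖x‖ ^ e + x c * (e * x a * ‖x‖ ^ (e - 2))) := by
  rw [pd_mul diff_coord (D1 hx), pd_coord, P1 hx]

lemma D3 (hx : x ≠ 0) {c d : Fin m} :
    DifferentiableAt ℝ (fun y : EuclideanSpace ℝ (Fin m) => y b * (y c * (y d * ‖y‖ ^ e))) x :=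
  diff_coord.mul (D2 hx)

lemma P3 (hx : x ≠ 0) {c d : Fin m} :
    pd a (fun y : EuclideanSpace ℝ (Fin m) => y b * (y c * (y d * ‖y‖ ^ e))) x
    = (if b = a then (1:ℝ) else 0) * (x c * (x d * ‖x‖ ^ e))
      + x b * ((if c = a then (1:ℝ) else 0) * (x d * ‖x‖ ^ e)
        + x c * ((if d = a then (1:ℝ) else 0) * ‖x‖ ^ e + x d * (e * x a * ‖x‖ ^ (e - 2)))) := by
  rw [pd_mul diff_coord (D2 hx), pd_coord, P2 hx]

lemma D4 (hx : x ≠ 0) {c d d' : Fin m} :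
    DifferentiableAt ℝ
      (fun y : EuclideanSpace ℝ (Fin m) => y b * (y c * (y d * (y d' * ‖y‖ ^ e)))) x :=
  diff_coord.mul (D3 hx)

lemma P4 (hx : x ≠ 0) {c d d' : Fin m} :
    pd a (fun y : EuclideanSpace ℝ (Fin m) => y b * (y c * (y d * (y d' * ‖y‖ ^ e)))) x
    = (if b = a then (1:ℝ) else 0) * (x c * (x d * (x d' * ‖x‖ ^ e)))
      + x b * ((if c = a then (1:ℝ) else 0) * (x d * (x d' * ‖x‖ ^ e))
        + x c * ((if d = a then (1:ℝ) else 0) * (x d' * ‖x‖ ^ e)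
          + x d * ((if d' = a then (1:ℝ) else 0) * ‖x‖ ^ e
            + x d' * (e * x a * ‖x‖ ^ (e - 2))))) := by
  rw [pd_mul diff_coord (D3 hx), pd_coord, P3 hx]

lemma Hu (b : Fin m) (t : Fin m → ℝ) :
    ∑ a : Fin m, (if b = a then (1:ℝ) else 0) * t a = t b := by
  simp [ite_mul]

lemma Huu (b c : Fin m) :
    ∑ a : Fin m, (if b = a then (1:ℝ) else 0) * (if c = a then (1:ℝ) else 0)
      = if b = c then (1:ℝ) else 0 := by
  simp [ite_mul]

lemma Hxx : ∑ a : Fin m, x a * x a = ‖x‖ ^ (2:ℤ) := by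
  have h1 : ∑ a : Fin m, x a * x a = ∑ a : Fin m, x a ^ 2 := by
    simp [sq]
  rw [h1, EuclideanSpace.norm_eq]
  rw [show ((2:ℤ) : ℤ) = ((2:ℕ) : ℤ) from rfl, zpow_natCast]
  rw [Real.sq_sqrt (by positivity)]
  simp [Real.norm_eq_abs, sq_abs]

lemma Hconst (C : ℝ) : ∑ _a : Fin m, C = (m : ℝ) * C := by
  simp [Finset.sum_const, nsmul_eq_mul]

def Pf (m : ℕ) (c d1 d2 d3 : ℝ) (i j k : Fin m) (y : EuclideanSpace ℝ (Fin m)) : ℝ :=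
  c * ((d1 * y k + d2 * y i + d3 * y j) * ‖y‖ ^ (2:ℤ)
    - ((m:ℝ) + 2) * (y i * (y j * y k)))

lemma key {m : ℕ} {x : EuclideanSpace ℝ (Fin m)} (hx : x ≠ 0) (c d1 d2 d3 : ℝ)
    (i j k : Fin m) (hd1 : d1 = if i = j then (1:ℝ) else 0)
    (hd2 : d2 = if j = k then (1:ℝ) else 0) (hd3 : d3 = if i = k then (1:ℝ) else 0)
    (e : ℤ) :
    lap (fun y => Pf m c d1 d2 d3 i j k y * ‖y‖ ^ e) x
      = ((e:ℝ) * ((e:ℝ) + (m:ℝ) + 4)) * Pf m c d1 d2 d3 i j k x * ‖x‖ ^ (e - 2) := by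
  have claimA : ∀ (a : Fin m) (y : EuclideanSpace ℝ (Fin m)), y ≠ 0 →
      pd a (fun z => Pf m c d1 d2 d3 i j k z * ‖z‖ ^ e) y
        = (c * (d1 * (if k = a then (1:ℝ) else 0) + d2 * (if i = a then (1:ℝ) else 0)
              + d3 * (if j = a then (1:ℝ) else 0))) * ‖y‖ ^ (e + 2)
          + (c * d1 * ((e:ℝ) + 2)) * (y k * (y a * ‖y‖ ^ e))
          + (c * d2 * ((e:ℝ) + 2)) * (y i * (y a * ‖y‖ ^ e))
          + (c * d3 * ((e:ℝ) + 2)) * (y j * (y a * ‖y‖ ^ e))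
          + (-(c * ((m:ℝ) + 2) * (if i = a then (1:ℝ) else 0))) * (y j * (y k * ‖y‖ ^ e))
          + (-(c * ((m:ℝ) + 2) * (if j = a then (1:ℝ) else 0))) * (y i * (y k * ‖y‖ ^ e))
          + (-(c * ((m:ℝ) + 2) * (if k = a then (1:ℝ) else 0))) * (y i * (y j * ‖y‖ ^ e))
          + (-(c * ((m:ℝ) + 2) * (e:ℝ))) * (y i * (y j * (y k * (y a * ‖y‖ ^ (e - 2))))) := by
    intro a y hy
    have hr : ‖y‖ ≠ 0 := norm_ne_zero_iff.mpr hy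
    have hg1 : ∀ z : EuclideanSpace ℝ (Fin m), z ≠ 0 →
        Pf m c d1 d2 d3 i j k z * ‖z‖ ^ e
          = (c * d1) * (z k * ‖z‖ ^ (e + 2)) + (c * d2) * (z i * ‖z‖ ^ (e + 2))
            + (c * d3) * (z j * ‖z‖ ^ (e + 2))
            + (-(c * ((m:ℝ) + 2))) * (z i * (z j * (z k * ‖z‖ ^ e))) := by
      intro z hz
      have hrz : ‖z‖ ≠ 0 := norm_ne_zero_iff.mpr hz
      have h2 : ‖z‖ ^ (e + 2) = ‖z‖ ^ (2:ℤ) * ‖z‖ ^ e := by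
        rw [← zpow_add₀ hrz]; congr 1; ring
      simp only [Pf, h2]; ring
    rw [pd_congr_of_ne hy hg1 a]
    rw [pd_add (((D1 hy).const_mul _).fun_add ((D1 hy).const_mul _) |>.fun_add
          ((D1 hy).const_mul _)) ((D3 hy).const_mul _),
        pd_add (((D1 hy).const_mul _).fun_add ((D1 hy).const_mul _)) ((D1 hy).const_mul _),
        pd_add ((D1 hy).const_mul _) ((D1 hy).const_mul _),
        pd_const_mul _ (D1 hy), pd_const_mul _ (D1 hy), pd_const_mul _ (D1 hy),
        pd_const_mul _ (D3 hy), P1 hy, P1 hy, P1 hy, P3 hy]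
    simp only [add_sub_cancel_right]
    push_cast
    ring
  -- second derivative of the closed form
  have hr : ‖x‖ ≠ 0 := norm_ne_zero_iff.mpr hx
  have claimB : ∀ a : Fin m,
      pd a (pd a (fun z => Pf m c d1 d2 d3 i j k z * ‖z‖ ^ e)) x
        = (2*c*d2*((e:ℝ)+2)*‖x‖^e - 2*c*((m:ℝ)+2)*(e:ℝ)*(x j * x k)*‖x‖^(e-2))
            * ((if i = a then (1:ℝ) else 0) * x a)
          + (2*c*d3*((e:ℝ)+2)*‖x‖^e - 2*c*((m:ℝ)+2)*(e:ℝ)*(x i * x k)*‖x‖^(e-2))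
            * ((if j = a then (1:ℝ) else 0) * x a)
          + (2*c*d1*((e:ℝ)+2)*‖x‖^e - 2*c*((m:ℝ)+2)*(e:ℝ)*(x i * x j)*‖x‖^(e-2))
            * ((if k = a then (1:ℝ) else 0) * x a)
          + (c*((e:ℝ)+2)*(e:ℝ)*(d1*(x k)+d2*(x i)+d3*(x j))*‖x‖^(e-2)
              - c*((m:ℝ)+2)*(e:ℝ)*((e:ℝ)-2)*(x i*(x j*x k))*‖x‖^(e-4)) * (x a * x a)
          + (-2*c*((m:ℝ)+2)*(x k)*‖x‖^e)
            * ((if i = a then (1:ℝ) else 0) * (if j = a then (1:ℝ) else 0))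
          + (-2*c*((m:ℝ)+2)*(x j)*‖x‖^e)
            * ((if i = a then (1:ℝ) else 0) * (if k = a then (1:ℝ) else 0))
          + (-2*c*((m:ℝ)+2)*(x i)*‖x‖^e)
            * ((if j = a then (1:ℝ) else 0) * (if k = a then (1:ℝ) else 0))
          + (c*((e:ℝ)+2)*(d1*(x k)+d2*(x i)+d3*(x j))*‖x‖^e
              - c*((m:ℝ)+2)*(e:ℝ)*(x i*(x j*x k))*‖x‖^(e-2)) := by
    intro a
    rw [pd_congr_of_ne hx (claimA a) a]
    have h22 : (e:ℤ) - 2 - 2 = e - 4 := by ring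
    rw [pd_add ((((((((diff_rz hx).const_mul _).fun_add ((D2 hx).const_mul _)).fun_add
            ((D2 hx).const_mul _)).fun_add ((D2 hx).const_mul _)).fun_add
            ((D2 hx).const_mul _)).fun_add ((D2 hx).const_mul _)).fun_add
            ((D2 hx).const_mul _)) ((D4 hx).const_mul _),
        pd_add (((((((diff_rz hx).const_mul _).fun_add ((D2 hx).const_mul _)).fun_add
            ((D2 hx).const_mul _)).fun_add ((D2 hx).const_mul _)).fun_add
            ((D2 hx).const_mul _)).fun_add ((D2 hx).const_mul _)) ((D2 hx).const_mul _),
        pd_add ((((((diff_rz hx).const_mul _).fun_add ((D2 hx).const_mul _)).fun_add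
            ((D2 hx).const_mul _)).fun_add ((D2 hx).const_mul _)).fun_add
            ((D2 hx).const_mul _)) ((D2 hx).const_mul _),
        pd_add (((((diff_rz hx).const_mul _).fun_add ((D2 hx).const_mul _)).fun_add
            ((D2 hx).const_mul _)).fun_add ((D2 hx).const_mul _)) ((D2 hx).const_mul _),
        pd_add ((((diff_rz hx).const_mul _).fun_add ((D2 hx).const_mul _)).fun_add
            ((D2 hx).const_mul _)) ((D2 hx).const_mul _),
        pd_add (((diff_rz hx).const_mul _).fun_add ((D2 hx).const_mul _)) ((D2 hx).const_mul _),
        pd_add ((diff_rz hx).const_mul _) ((D2 hx).const_mul _),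
        pd_const_mul _ (diff_rz hx), pd_const_mul _ (D2 hx), pd_const_mul _ (D2 hx),
        pd_const_mul _ (D2 hx), pd_const_mul _ (D2 hx), pd_const_mul _ (D2 hx),
        pd_const_mul _ (D2 hx), pd_const_mul _ (D4 hx),
        pd_rz hx, P2 hx, P2 hx, P2 hx, P2 hx, P2 hx, P2 hx, P4 hx, h22]
    simp only [if_pos rfl, add_sub_cancel_right]
    push_cast
    ring
  rw [lap]
  rw [Finset.sum_congr rfl fun a _ => claimB a]
  simp only [Finset.sum_add_distrib, ← Finset.mul_sum]
  rw [Hu i (fun a => x a), Hu j (fun a => x a), Hu k (fun a => x a), Hxx,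
      Huu i j, Huu i k, Huu j k, Hconst, ← hd1, ← hd2, ← hd3]
  have hB : ‖x‖ ^ e = ‖x‖ ^ (2:ℤ) * ‖x‖ ^ (e - 2) := by
    rw [← zpow_add₀ hr]; congr 1; ring
  have hC : ‖x‖ ^ (e - 2) = ‖x‖ ^ (2:ℤ) * ‖x‖ ^ (e - 4) := by
    rw [← zpow_add₀ hr]; congr 1; ring
  simp only [Pf]
  rw [hB, hC]
  ring

lemma lap_congr_of_ne {f g : EuclideanSpace ℝ (Fin m) → ℝ} (hx : x ≠ 0)
    (h : ∀ y : EuclideanSpace ℝ (Fin m), y ≠ 0 → f y = g y) : lap f x = lap g x :=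
  Finset.sum_congr rfl fun a _ =>
    pd_congr_of_ne hx (fun y hy => pd_congr_of_ne hy h a) a

lemma Pf_smul {c d1 d2 d3 : ℝ} {i j k : Fin m} (t : ℝ) (y : EuclideanSpace ℝ (Fin m)) :
    Pf m (t * c) d1 d2 d3 i j k y = t * Pf m c d1 d2 d3 i j k y := by
  unfold Pf; ring


lemma hv {i j k : Fin m} (c d1 d2 d3 : ℝ) : ∀ y : EuclideanSpace ℝ (Fin m), y ≠ 0 →
    c * (d1 * y k / ‖y‖ + d2 * y i / ‖y‖ + d3 * y j / ‖y‖
        - ((m : ℝ) + 2) * y i * y j * y k / ‖y‖ ^ 3)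
      = Pf m c d1 d2 d3 i j k y * ‖y‖ ^ (-3 : ℤ) := by
  intro y hy
  have hr : ‖y‖ ≠ 0 := norm_ne_zero_iff.mpr hy
  unfold Pf
  have h3 : ‖y‖ ^ (-3:ℤ) = (‖y‖ ^ 3)⁻¹ := by
    rw [zpow_neg, show ((3:ℤ)) = ((3:ℕ):ℤ) from rfl, zpow_natCast]
  have h2 : ‖y‖ ^ (2:ℤ) = ‖y‖ ^ 2 := by
    rw [show ((2:ℤ)) = ((2:ℕ):ℤ) from rfl, zpow_natCast]
  rw [h3, h2]
  field_simp

theorem stmt14 (m : ℕ) (hm : 2 ≤ m) (x : EuclideanSpace ℝ (Fin m)) (hx : x ≠ 0)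
    (i j k : Fin m) :
    lap (lap (vMN m i j k)) x
      = (15 * ((m : ℝ) + 1) * ((m : ℝ) - 1) / ‖x‖ ^ 4) * vMN m i j k x := by
  set c' : ℝ := 1 / Real.sqrt (((m : ℝ) - 1) * ((m : ℝ) + 2)) with hc'
  set d1 : ℝ := if i = j then (1:ℝ) else 0 with hd1
  set d2 : ℝ := if j = k then (1:ℝ) else 0 with hd2
  set d3 : ℝ := if i = k then (1:ℝ) else 0 with hd3
  have hr : ‖x‖ ≠ 0 := norm_ne_zero_iff.mpr hx
  have hveq : ∀ y : EuclideanSpace ℝ (Fin m), y ≠ 0 →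
      vMN m i j k y = Pf m c' d1 d2 d3 i j k y * ‖y‖ ^ (-3 : ℤ) :=
    fun y hy => hv c' d1 d2 d3 y hy
  have h1 : ∀ y : EuclideanSpace ℝ (Fin m), y ≠ 0 →
      lap (vMN m i j k) y
        = Pf m (((-3:ℝ) * ((-3:ℝ) + (m:ℝ) + 4)) * c') d1 d2 d3 i j k y * ‖y‖ ^ (-5 : ℤ) := by
    intro y hy
    have hry : ‖y‖ ≠ 0 := norm_ne_zero_iff.mpr hy
    rw [lap_congr_of_ne hy hveq, key hy c' d1 d2 d3 i j k hd1 hd2 hd3 (-3),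
        Pf_smul, show ((-3:ℤ) - 2) = (-5:ℤ) from by norm_num]
    push_cast
    ring
  rw [lap_congr_of_ne hx h1, key hx _ d1 d2 d3 i j k hd1 hd2 hd3 (-5),
      Pf_smul, hveq x hx]
  have h7 : ‖x‖ ^ ((-5:ℤ) - 2) = ‖x‖ ^ (-3:ℤ) * (‖x‖ ^ 4)⁻¹ := by
    rw [show ((-5:ℤ) - 2) = (-3:ℤ) + (-4:ℤ) from by norm_num, zpow_add₀ hr]
    congr 1
  rw [h7]
  push_cast
  ring
end
end

section
/- Let m > 4 be an integer, let v : ℝ^m ∖ {0} → ℝ^{m³} be the cubic Misawa–Nakauchi map, let β ∈ (0, π/2) satisfy sin²β = (5/6)·(m−1)/(m+1), and define ṽ(x) = (sin β · v(x), cos β) with values in 𝕊^{m³} ⊂ ℝ^{m³+1}. Then the energy density of ṽ satisfies |∇ṽ(x)|²/2 = (5/4)·(m−1)/r(x)² for every x ∈ ℝ^m ∖ {0}. -/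
noncomputable section

open Real MeasureTheory

/-- The rotated map `ṽ_β = (sin β · v, cos β)`, with values in `ℝ^{m³+1} = ℝ^{m³} × ℝ`. -/
def vTilde (m : ℕ) (β : ℝ) :
    (Fin m × Fin m × Fin m) ⊕ Unit → EuclideanSpace ℝ (Fin m) → ℝ
  | Sum.inl p => fun x => Real.sin β * vMN m p.1 p.2.1 p.2.2 x
  | Sum.inr _ => fun _ => Real.cos β

variable {m : ℕ}

lemma hasFD_norm {x : EuclideanSpace ℝ (Fin m)} (hx : x ≠ 0) :
    HasFDerivAt (fun y : EuclideanSpace ℝ (Fin m) => ‖y‖) (‖x‖⁻¹ • innerSL ℝ x) x := by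
  have hr : ‖x‖ ≠ 0 := norm_ne_zero_iff.mpr hx
  have h1 : HasFDerivAt (fun y : EuclideanSpace ℝ (Fin m) => ‖y‖ ^ 2)
      (2 • (innerSL ℝ x)) x := (hasStrictFDerivAt_norm_sq x).hasFDerivAt
  have h2 : HasDerivAt Real.sqrt (1 / (2 * Real.sqrt (‖x‖ ^ 2))) (‖x‖ ^ 2) :=
    Real.hasDerivAt_sqrt (by positivity)
  have h3 := h2.comp_hasFDerivAt x h1
  have hfun : (Real.sqrt ∘ fun y : EuclideanSpace ℝ (Fin m) => ‖y‖ ^ 2)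
      = fun y : EuclideanSpace ℝ (Fin m) => ‖y‖ := by
    funext y
    simp [Function.comp, Real.sqrt_sq (norm_nonneg y)]
  rw [hfun] at h3
  refine h3.congr_fderiv (Eq.symm ?_)
  rw [Real.sqrt_sq (norm_nonneg x)]
  ext y
  simp [ContinuousLinearMap.smul_apply, smul_smul]
  ring

lemma hasFD_norm3 {x : EuclideanSpace ℝ (Fin m)} (hx : x ≠ 0) :
    HasFDerivAt (fun y : EuclideanSpace ℝ (Fin m) => ‖y‖ ^ 3) ((3 * ‖x‖) • innerSL ℝ x) x := by
  have hr : ‖x‖ ≠ 0 := norm_ne_zero_iff.mpr hx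
  have h2 : HasDerivAt (fun t : ℝ => t ^ 3) (3 * ‖x‖ ^ 2) ‖x‖ := by
    simpa using hasDerivAt_pow 3 ‖x‖
  have h3 := h2.comp_hasFDerivAt x (hasFD_norm hx)
  have hfun : ((fun t : ℝ => t ^ 3) ∘ fun y : EuclideanSpace ℝ (Fin m) => ‖y‖)
      = fun y : EuclideanSpace ℝ (Fin m) => ‖y‖ ^ 3 := rfl
  rw [hfun] at h3
  refine h3.congr_fderiv (Eq.symm ?_)
  ext y
  simp [smul_smul]
  left
  field_simp

lemma hasFD_div {E : Type*} [NormedAddCommGroup E] [NormedSpace ℝ E]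
    {f g : E → ℝ} {f' g' : E →L[ℝ] ℝ} {x : E}
    (hf : HasFDerivAt f f' x) (hg : HasFDerivAt g g' x) (h0 : g x ≠ 0) :
    HasFDerivAt (fun y => f y / g y)
      ((g x)⁻¹ • f' + (-(f x) / (g x) ^ 2) • g') x := by
  have hinv : HasFDerivAt (fun y => (g y)⁻¹) ((-1 / (g x) ^ 2) • g') x := by
    have h2 : HasDerivAt (fun t : ℝ => t⁻¹) (-1 / g x ^ 2) (g x) := by
      simpa [neg_div, one_div] using hasDerivAt_inv h0
    exact h2.comp_hasFDerivAt x hg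
  have h3 := hf.fun_mul hinv
  have hfun : (fun y => f y * (g y)⁻¹) = fun y => f y / g y := by
    funext y; rw [div_eq_mul_inv]
  rw [hfun] at h3
  refine h3.congr_fderiv (Eq.symm ?_)
  ext y
  simp [ContinuousLinearMap.add_apply, ContinuousLinearMap.smul_apply, smul_eq_mul]
  ring

lemma hasFD_coord (k : Fin m) (x : EuclideanSpace ℝ (Fin m)) :
    HasFDerivAt (fun y : EuclideanSpace ℝ (Fin m) => y k)
      (EuclideanSpace.proj (𝕜 := ℝ) k) x :=
  (EuclideanSpace.proj (𝕜 := ℝ) k).hasFDerivAt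

def dd {m : ℕ} (p q : Fin m) : ℝ := if p = q then 1 else 0

def uF {m : ℕ} (x : EuclideanSpace ℝ (Fin m)) (i : Fin m) : ℝ := x i / ‖x‖

def PF {m : ℕ} (x : EuclideanSpace ℝ (Fin m)) (a t : Fin m) : ℝ :=
  dd t a - uF x a * uF x t

def FF {m : ℕ} (x : EuclideanSpace ℝ (Fin m)) (a i j k : Fin m) : ℝ :=
  dd i j * PF x a k + dd j k * PF x a i + dd i k * PF x a j
    - ((m : ℝ) + 2) * (PF x a i * uF x j * uF x k + PF x a j * uF x i * uF x k
        + PF x a k * uF x i * uF x j)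

set_option maxHeartbeats 1000000 in
lemma pd_vMN {x : EuclideanSpace ℝ (Fin m)} (hx : x ≠ 0) (i j k a : Fin m) :
    pd a (vMN m i j k) x =
      (1 / Real.sqrt (((m : ℝ) - 1) * ((m : ℝ) + 2))) / ‖x‖ * FF x a i j k := by
  have hr : ‖x‖ ≠ 0 := norm_ne_zero_iff.mpr hx
  have hr3 : ‖x‖ ^ 3 ≠ 0 := pow_ne_zero _ hr
  have hN := hasFD_norm hx
  have hN3 := hasFD_norm3 hx
  have h1 := hasFD_div ((hasFD_coord k x).const_mul (if i = j then (1:ℝ) else 0)) hN hr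
  have h2 := hasFD_div ((hasFD_coord i x).const_mul (if j = k then (1:ℝ) else 0)) hN hr
  have h3 := hasFD_div ((hasFD_coord j x).const_mul (if i = k then (1:ℝ) else 0)) hN hr
  have h4 := hasFD_div ((((hasFD_coord i x).const_mul ((m:ℝ)+2)).fun_mul (hasFD_coord j x)).fun_mul
      (hasFD_coord k x)) hN3 hr3
  have hv := ((((h1.fun_add h2).fun_add h3).fun_sub h4).const_mul
      (1 / Real.sqrt (((m : ℝ) - 1) * ((m : ℝ) + 2))))
  have heq : vMN m i j k = fun y : EuclideanSpace ℝ (Fin m) =>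
      (1 / Real.sqrt (((m : ℝ) - 1) * ((m : ℝ) + 2))) *
        ((if i = j then (1 : ℝ) else 0) * y k / ‖y‖
          + (if j = k then (1 : ℝ) else 0) * y i / ‖y‖
          + (if i = k then (1 : ℝ) else 0) * y j / ‖y‖
          - ((m : ℝ) + 2) * y i * y j * y k / ‖y‖ ^ 3) := rfl
  rw [pd, heq, hv.fderiv]
  simp only [ContinuousLinearMap.add_apply, ContinuousLinearMap.sub_apply,
    ContinuousLinearMap.smul_apply, smul_eq_mul, innerSL_apply_apply,
    PiLp.proj_apply, EuclideanSpace.inner_single_right, EuclideanSpace.single_apply,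
    RCLike.inner_apply, starRingEnd_apply, star_trivial]
  simp only [FF, PF, uF, dd]
  set c0 := 1 / Real.sqrt (((m : ℝ) - 1) * ((m : ℝ) + 2)) with hc0
  set d1 := (if i = j then (1:ℝ) else 0) with hd1
  set d2 := (if j = k then (1:ℝ) else 0) with hd2
  set d3 := (if i = k then (1:ℝ) else 0) with hd3
  set e1 := (if k = a then (1:ℝ) else 0) with he1
  set e2 := (if i = a then (1:ℝ) else 0) with he2
  set e3 := (if j = a then (1:ℝ) else 0) with he3
  field_simp
  ring

lemma diff_vMN {x : EuclideanSpace ℝ (Fin m)} (hx : x ≠ 0) (i j k : Fin m) :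
    DifferentiableAt ℝ (vMN m i j k) x := by
  have hr : ‖x‖ ≠ 0 := norm_ne_zero_iff.mpr hx
  have hr3 : ‖x‖ ^ 3 ≠ 0 := pow_ne_zero _ hr
  have hN := hasFD_norm hx
  have hN3 := hasFD_norm3 hx
  have h1 := hasFD_div ((hasFD_coord k x).const_mul (if i = j then (1:ℝ) else 0)) hN hr
  have h2 := hasFD_div ((hasFD_coord i x).const_mul (if j = k then (1:ℝ) else 0)) hN hr
  have h3 := hasFD_div ((hasFD_coord j x).const_mul (if i = k then (1:ℝ) else 0)) hN hr
  have h4 := hasFD_div ((((hasFD_coord i x).const_mul ((m:ℝ)+2)).mul (hasFD_coord j x)).mul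
      (hasFD_coord k x)) hN3 hr3
  exact ((((h1.add h2).add h3).sub h4).const_mul
      (1 / Real.sqrt (((m : ℝ) - 1) * ((m : ℝ) + 2)))).differentiableAt

lemma dd_self (i : Fin m) : dd i i = 1 := by simp [dd]

lemma sum_dd (i0 : Fin m) (g : Fin m → ℝ) : ∑ t, dd i0 t * g t = g i0 := by
  simp [dd, ite_mul, Finset.sum_ite_eq]

lemma sum_dd' (a : Fin m) (g : Fin m → ℝ) : ∑ t, dd t a * g t = g a := by
  simp [dd, ite_mul, Finset.sum_ite_eq']

lemma norm_sq_eq_sum (x : EuclideanSpace ℝ (Fin m)) : ‖x‖ ^ 2 = ∑ t, x t * x t := by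
  rw [EuclideanSpace.norm_eq, Real.sq_sqrt (by positivity)]
  simp [sq_abs, pow_two]

lemma husq {x : EuclideanSpace ℝ (Fin m)} (hx : x ≠ 0) :
    ∑ t, uF x t * uF x t = 1 := by
  have hr : ‖x‖ ≠ 0 := norm_ne_zero_iff.mpr hx
  have : ∑ t, uF x t * uF x t = (∑ t, x t * x t) / ‖x‖ ^ 2 := by
    rw [Finset.sum_div]
    exact Finset.sum_congr rfl fun t _ => by simp [uF, div_mul_div_comm, pow_two]
  rw [this, ← norm_sq_eq_sum, div_self (pow_ne_zero _ hr)]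

lemma hPu {x : EuclideanSpace ℝ (Fin m)} (hx : x ≠ 0) (a : Fin m) :
    ∑ t, PF x a t * uF x t = 0 := by
  have e : ∀ t, PF x a t * uF x t = dd t a * uF x t - uF x a * (uF x t * uF x t) :=
    fun t => by rw [PF]; ring
  rw [Finset.sum_congr rfl fun t _ => e t, Finset.sum_sub_distrib, sum_dd' a,
    ← Finset.mul_sum, husq hx]
  ring

lemma hPP {x : EuclideanSpace ℝ (Fin m)} (hx : x ≠ 0) (a : Fin m) :
    ∑ t, PF x a t * PF x a t = PF x a a := by
  have e : ∀ t, PF x a t * PF x a t =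
      dd t a * (dd t a - uF x a * uF x t) - (uF x a * uF x t) * PF x a t := fun t => by
    rw [PF]; ring
  have e2 : ∀ t, (uF x a * uF x t) * PF x a t = uF x a * (PF x a t * uF x t) :=
    fun t => by ring
  rw [Finset.sum_congr rfl fun t _ => e t, Finset.sum_sub_distrib,
    sum_dd' a (fun t => dd t a - uF x a * uF x t),
    Finset.sum_congr rfl fun t _ => e2 t, ← Finset.mul_sum, hPu hx a, dd_self, PF, dd_self]
  ring

lemma hPaa {x : EuclideanSpace ℝ (Fin m)} (hx : x ≠ 0) :
    ∑ a, PF x a a = (m : ℝ) - 1 := by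
  have e : ∀ a : Fin m, PF x a a = 1 - uF x a * uF x a := fun a => by rw [PF, dd_self]
  rw [Finset.sum_congr rfl fun a _ => e a, Finset.sum_sub_distrib, husq hx,
    Finset.sum_const, Finset.card_univ, Fintype.card_fin, nsmul_eq_mul, mul_one]

lemma sumk {x : EuclideanSpace ℝ (Fin m)} (hx : x ≠ 0) (a i j : Fin m) :
    ∑ k, FF x a i j k ^ 2 =
      PF x a j * PF x a j + PF x a i * PF x a i
      + (((m:ℝ)+2)^2 - 2*((m:ℝ)+2)) * (uF x j * uF x j) * (PF x a i * PF x a i)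
      + (2*((m:ℝ)+2)^2 - 8*((m:ℝ)+2)) * (uF x i * uF x j) * (PF x a i * PF x a j)
      + (((m:ℝ)+2)^2 - 2*((m:ℝ)+2)) * (uF x i * uF x i) * (PF x a j * PF x a j)
      + ((m:ℝ)+2)^2 * (uF x i * uF x i) * (uF x j * uF x j) * PF x a a
      + 6 * dd i j * (PF x a i * PF x a j)
      - 2*((m:ℝ)+2) * dd i j * (uF x i * uF x j) * PF x a a
      + dd i j * dd i j * PF x a a := by
  have e : ∀ k, FF x a i j k ^ 2 =
      (dd i j - ((m:ℝ)+2) * uF x i * uF x j)^2 * (PF x a k * PF x a k)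
      + (((m:ℝ)+2) * (PF x a i * uF x j + PF x a j * uF x i))^2 * (uF x k * uF x k)
      + (PF x a i * PF x a i) * (dd j k * dd j k)
      + (PF x a j * PF x a j) * (dd i k * dd i k)
      + (-2 * ((m:ℝ)+2) * (dd i j - ((m:ℝ)+2) * uF x i * uF x j)
          * (PF x a i * uF x j + PF x a j * uF x i)) * (PF x a k * uF x k)
      + (2 * (dd i j - ((m:ℝ)+2) * uF x i * uF x j) * PF x a i) * (dd j k * PF x a k)
      + (2 * (dd i j - ((m:ℝ)+2) * uF x i * uF x j) * PF x a j) * (dd i k * PF x a k)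
      + (-2 * ((m:ℝ)+2) * (PF x a i * uF x j + PF x a j * uF x i) * PF x a i)
          * (dd j k * uF x k)
      + (-2 * ((m:ℝ)+2) * (PF x a i * uF x j + PF x a j * uF x i) * PF x a j)
          * (dd i k * uF x k)
      + (2 * PF x a i * PF x a j) * (dd j k * dd i k) := by
    intro k
    simp only [FF]
    ring
  rw [Finset.sum_congr rfl fun k _ => e k]
  simp only [Finset.sum_add_distrib, ← Finset.mul_sum]
  rw [hPP hx a, husq hx, hPu hx a, sum_dd j (fun k => dd j k), sum_dd i (fun k => dd i k),
    sum_dd j (fun k => PF x a k), sum_dd i (fun k => PF x a k),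
    sum_dd j (fun k => uF x k), sum_dd i (fun k => uF x k), sum_dd j (fun k => dd i k),
    dd_self, dd_self]
  ring

lemma sumjk {x : EuclideanSpace ℝ (Fin m)} (hx : x ≠ 0) (a i : Fin m) :
    ∑ j, ∑ k, FF x a i j k ^ 2 =
      2 * PF x a a + (6 + (m:ℝ) - 2*((m:ℝ)+2) + ((m:ℝ)+2)^2) * (PF x a i * PF x a i)
      + (2*((m:ℝ)+2)^2 - 4*((m:ℝ)+2)) * (uF x i * uF x i) * PF x a a := by
  have e : ∀ j, ∑ k, FF x a i j k ^ 2 =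
      (1 + (((m:ℝ)+2)^2 - 2*((m:ℝ)+2)) * (uF x i * uF x i)) * (PF x a j * PF x a j)
      + PF x a i * PF x a i
      + ((((m:ℝ)+2)^2 - 2*((m:ℝ)+2)) * (PF x a i * PF x a i)
          + ((m:ℝ)+2)^2 * (uF x i * uF x i) * PF x a a) * (uF x j * uF x j)
      + ((2*((m:ℝ)+2)^2 - 8*((m:ℝ)+2)) * (uF x i * PF x a i)) * (PF x a j * uF x j)
      + (6 * PF x a i) * (dd i j * PF x a j)
      + (-2*((m:ℝ)+2) * uF x i * PF x a a) * (dd i j * uF x j)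
      + PF x a a * (dd i j * dd i j) := by
    intro j
    rw [sumk hx a i j]
    ring
  rw [Finset.sum_congr rfl fun j _ => e j]
  simp only [Finset.sum_add_distrib, ← Finset.mul_sum, Finset.sum_const, Finset.card_univ,
    Fintype.card_fin, nsmul_eq_mul]
  rw [hPP hx a, husq hx, hPu hx a, sum_dd i (fun j => PF x a j), sum_dd i (fun j => uF x j),
    sum_dd i (fun j => dd i j), dd_self]
  ring

lemma sumijk {x : EuclideanSpace ℝ (Fin m)} (hx : x ≠ 0) (a : Fin m) :
    ∑ i, ∑ j, ∑ k, FF x a i j k ^ 2 = 3*((m:ℝ)+1)*((m:ℝ)+2) * PF x a a := by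
  have e : ∀ i, ∑ j, ∑ k, FF x a i j k ^ 2 =
      2 * PF x a a
      + (6 + (m:ℝ) - 2*((m:ℝ)+2) + ((m:ℝ)+2)^2) * (PF x a i * PF x a i)
      + ((2*((m:ℝ)+2)^2 - 4*((m:ℝ)+2)) * PF x a a) * (uF x i * uF x i) := by
    intro i
    rw [sumjk hx a i]
    ring
  rw [Finset.sum_congr rfl fun i _ => e i]
  simp only [Finset.sum_add_distrib, ← Finset.mul_sum, Finset.sum_const, Finset.card_univ,
    Fintype.card_fin, nsmul_eq_mul]
  rw [hPP hx a, husq hx]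
  ring

lemma sumF {x : EuclideanSpace ℝ (Fin m)} (hx : x ≠ 0) :
    ∑ a, ∑ i, ∑ j, ∑ k, FF x a i j k ^ 2 = 3*((m:ℝ)+1)*((m:ℝ)+2)*((m:ℝ)-1) := by
  rw [Finset.sum_congr rfl fun a _ => sumijk hx a]
  rw [← Finset.mul_sum, hPaa hx]


theorem stmt17 (m : ℕ) (hm : 4 < m) (β : ℝ) (hβ : β ∈ Set.Ioo 0 (π / 2))
    (hsin : Real.sin β ^ 2 = (5 / 6) * (((m : ℝ) - 1) / ((m : ℝ) + 1)))
    (x : EuclideanSpace ℝ (Fin m)) (hx : x ≠ 0) :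
    gradSq (vTilde m β) x / 2 = (5 / 4) * (((m : ℝ) - 1) / ‖x‖ ^ 2) := by
  have hr : ‖x‖ ≠ 0 := norm_ne_zero_iff.mpr hx
  have hm4 : (4:ℝ) < (m:ℝ) := by exact_mod_cast hm
  have e1 : ((m:ℝ) - 1) ≠ 0 := by nlinarith
  have e2 : ((m:ℝ) + 2) ≠ 0 := by nlinarith
  have e3 : ((m:ℝ) + 1) ≠ 0 := by nlinarith
  set c := 1 / Real.sqrt (((m : ℝ) - 1) * ((m : ℝ) + 2)) with hc
  have h1 : ∀ (d : Fin m) (p : Fin m × Fin m × Fin m),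
      pd d (vTilde m β (Sum.inl p)) x = Real.sin β * (c / ‖x‖ * FF x d p.1 p.2.1 p.2.2) := by
    intro d p
    rw [show vTilde m β (Sum.inl p) = (fun y => Real.sin β * vMN m p.1 p.2.1 p.2.2 y) from rfl,
      pd, fderiv_const_mul (diff_vMN hx p.1 p.2.1 p.2.2) (Real.sin β)]
    have happ : (Real.sin β • fderiv ℝ (vMN m p.1 p.2.1 p.2.2) x) (EuclideanSpace.single d 1)
        = Real.sin β * pd d (vMN m p.1 p.2.1 p.2.2) x := by
      simp [pd]
    rw [happ, pd_vMN hx p.1 p.2.1 p.2.2 d, hc]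
  have h0 : ∀ (d : Fin m) (u : Unit), pd d (vTilde m β (Sum.inr u)) x = 0 := by
    intro d u
    rw [show vTilde m β (Sum.inr u) = (fun _ => Real.cos β) from rfl, pd, fderiv_fun_const]
    simp
  have hc2 : c ^ 2 = 1 / (((m:ℝ) - 1) * ((m:ℝ) + 2)) := by
    rw [hc, div_pow, one_pow, Real.sq_sqrt (by nlinarith : (0:ℝ) ≤ ((m:ℝ)-1)*((m:ℝ)+2))]
  have key : gradSq (vTilde m β) x
      = (Real.sin β * (c / ‖x‖))^2 * (3*((m:ℝ)+1)*((m:ℝ)+2)*((m:ℝ)-1)) := by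
    rw [gradSq]
    have hstep : ∀ d : Fin m, ∑ p : (Fin m × Fin m × Fin m) ⊕ Unit,
        pd d (vTilde m β p) x ^ 2
        = (Real.sin β * (c / ‖x‖))^2 * ∑ i, ∑ j, ∑ k, FF x d i j k ^ 2 := by
      intro d
      rw [Fintype.sum_sum_type]
      have hz : ∑ u : Unit, pd d (vTilde m β (Sum.inr u)) x ^ 2 = 0 := by
        simp [h0 d]
      rw [hz, add_zero]
      simp only [Fintype.sum_prod_type, h1 d]
      have e : ∀ i j k : Fin m, (Real.sin β * (c / ‖x‖ * FF x d i j k))^2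
          = (Real.sin β * (c / ‖x‖))^2 * FF x d i j k ^ 2 := fun i j k => by ring
      simp only [e, ← Finset.mul_sum]
    rw [Finset.sum_congr rfl fun d _ => hstep d, ← Finset.mul_sum, sumF hx]
  rw [key, mul_pow, div_pow, hsin, hc2]
  field_simp
  ring
end
end
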